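/- The outer-bound expression is nondecreasing in the per-symbol cost constraint: if 0 < B ≤ B', then U_B(L) ≤ U_{B'}(L) for every integer L ≥ 1. -/

import Mathlib

open Finset Filter Topology

/-- Binary entropy function with base-2 logarithm. `Real.logb 2 0 = 0`, so
`H2 0 = H2 1 = 0` automatically. -/
noncomputable def H2 (p : ℝ) : ℝ :=
  -(p * Real.logb 2 p) - (1 - p) * Real.logb 2 (1 - p)

/-- Partial sums `s_j = ∑_{k=1}^j c_k` of the beam-budget sequence. -/
noncomputable def s (K B : ℝ) : ℕ → ℝ
  | 0 => 0
  | (j+1) => s K B j + min ((K - s K B j) / 2) B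

/-- The beam-budget sequence: `c_0 = 0` and `c_j = min((K - s_{j-1})/2, B)` for `j ≥ 1`. -/
noncomputable def c (K B : ℝ) : ℕ → ℝ
  | 0 => 0
  | (j+1) => min ((K - s K B j) / 2) B

/-- The `j`-th term of the outer bound (Theorem 1), for `j ≥ 1`. -/
noncomputable def t (K B : ℝ) (j : ℕ) : ℝ :=
  (1 - s K B (j-1) / K) * H2 (c K B j / (K - s K B (j-1))) + s K B (j-1) / K

/-- The outer-bound (Theorem 1) expression `U(L)`. -/
noncomputable def U (K B : ℝ) (L : ℕ) : ℝ :=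
  (1 / (L : ℝ)) * ∑ j ∈ Finset.Icc 1 L, t K B j

/-- The `j`-th eavesdropper-leakage term, for `j ≥ 1` (natural subtraction makes the
middle term vanish at `j = 1` and the final sum empty for `j ≤ 3`). -/
noncomputable def g (K B : ℝ) (j : ℕ) : ℝ :=
  ((K - s K B (j-1)) / K) * H2 (c K B j / K)
  + (c K B (j-1) * (K - s K B (j-2)) / K^2) *
      H2 ((1/2) * c K B (j-1) / (K - s K B (j-2)))
  + ∑ k ∈ Finset.Icc 1 (j-3),
      (1/K) * ((c K B (k+1))^2 / K^2) * (1/2 : ℝ)^(2*(j-k-2)-1)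

/-- The gap `G(L)` between the outer and inner bounds. -/
noncomputable def G (K B : ℝ) (L : ℕ) : ℝ :=
  (1 / (L : ℝ)) * ∑ j ∈ Finset.Icc 1 L, g K B j

/-- The inner-bound (Theorem 2) expression `I(L) = U(L) - G(L)`. -/
noncomputable def Ib (K B : ℝ) (L : ℕ) : ℝ := U K B L - G K B L

lemma H2_eq (p : ℝ) : H2 p = Real.binEntropy p / Real.log 2 := by
  unfold H2 Real.binEntropy Real.logb
  rw [Real.log_inv, Real.log_inv]
  ring

lemma H2_mono {p q : ℝ} (hp : 0 ≤ p) (hpq : p ≤ q) (hq : q ≤ 1/2) : H2 p ≤ H2 q := by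
  rw [H2_eq, H2_eq]
  apply div_le_div_of_nonneg_right ?_ (Real.log_pos one_lt_two).le
  exact Real.binEntropy_strictMonoOn.monotoneOn
    ⟨hp, by linarith [hpq, hq, (by norm_num : (1:ℝ)/2 = 2⁻¹)]⟩
    ⟨le_trans hp hpq, by linarith [(by norm_num : (1:ℝ)/2 = 2⁻¹)]⟩ hpq

lemma H2_le_one {q : ℝ} (hq0 : 0 ≤ q) (hq : q ≤ 1/2) : H2 q ≤ 1 := by
  rw [H2_eq]
  rw [div_le_one (Real.log_pos one_lt_two)]
  exact Real.binEntropy_le_log_two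

lemma s_bounds (K B : ℝ) (hK : 0 < K) (hB : 0 < B) : ∀ j, 0 ≤ s K B j ∧ s K B j < K := by
  intro j
  induction j with
  | zero => simpa [s] using hK
  | succ n ih =>
    obtain ⟨h0, h1⟩ := ih
    have hmin : 0 ≤ min ((K - s K B n) / 2) B := le_min (by linarith) hB.le
    have hle : min ((K - s K B n) / 2) B ≤ (K - s K B n) / 2 := min_le_left _ _
    constructor
    · simp only [s]; linarith
    · simp only [s]; linarith

lemma s_monoB (K B B' : ℝ) (hBB' : B ≤ B') : ∀ j, s K B j ≤ s K B' j := by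
  intro j
  induction j with
  | zero => simp [s]
  | succ n ih =>
    simp only [s]
    have e1 : ∀ x y : ℝ, x + min ((K - x) / 2) y = min ((K + x) / 2) (x + y) := by
      intro x y
      rw [← min_add_add_left]
      congr 1
      ring
    rw [e1, e1]
    exact min_le_min (by linarith) (by linarith)

lemma t_monoB (K B B' : ℝ) (hK : 2 ≤ K) (hB : 0 < B) (hBB' : B ≤ B') (j : ℕ) (hj : 1 ≤ j) :
    t K B j ≤ t K B' j := by
  obtain ⟨m, rfl⟩ : ∃ m, j = m + 1 := ⟨j - 1, (Nat.succ_pred_eq_of_pos hj).symm⟩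
  have hB' : 0 < B' := lt_of_lt_of_le hB hBB'
  have hK0 : 0 < K := by linarith
  obtain ⟨ha0, ha1⟩ := s_bounds K B hK0 hB m
  obtain ⟨hb0, hb1⟩ := s_bounds K B' hK0 hB' m
  have hab : s K B m ≤ s K B' m := s_monoB K B B' hBB' m
  simp only [t, c, Nat.add_sub_cancel]
  set a := s K B m with hadef
  set b := s K B' m with hbdef
  set p : ℝ := min ((K - a) / 2) B / (K - a) with hp
  set q : ℝ := min ((K - b) / 2) B' / (K - b) with hq
  have hKa : 0 < K - a := by linarith
  have hKb : 0 < K - b := by linarith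
  have hpeq : p = min (1/2) (B / (K - a)) := by
    rw [hp, ← min_div_div_right hKa.le]
    congr 1
    field_simp
  have hqeq : q = min (1/2) (B' / (K - b)) := by
    rw [hq, ← min_div_div_right hKb.le]
    congr 1
    field_simp
  have hp0 : 0 ≤ p := div_nonneg (le_min (by linarith) hB.le) hKa.le
  have hq2 : q ≤ 1/2 := by rw [hqeq]; exact min_le_left _ _
  have hpq : p ≤ q := by
    rw [hpeq, hqeq]
    exact min_le_min le_rfl (div_le_div₀ hB'.le hBB' hKb (by linarith))
  have hH : H2 p ≤ H2 q := H2_mono hp0 hpq hq2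
  have hH1 : H2 q ≤ 1 := H2_le_one (le_trans hp0 hpq) hq2
  have hdiv : a / K ≤ b / K := (div_le_div_iff_of_pos_right hK0).mpr hab
  have hb1' : b / K < 1 := (div_lt_one hK0).mpr hb1
  have key : (1 - b / K) * (1 - H2 q) ≤ (1 - a / K) * (1 - H2 p) :=
    mul_le_mul (by linarith) (by linarith) (by linarith) (by linarith)
  nlinarith [key]

theorem stmt_9 (K : ℕ) (hK : 2 ≤ K) (B B' : ℝ) (hB : 0 < B) (hBB' : B ≤ B') :
    ∀ L : ℕ, 1 ≤ L → U K B L ≤ U K B' L := by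
  intro L hL
  have hK' : (2:ℝ) ≤ (K:ℝ) := by exact_mod_cast hK
  unfold U
  apply mul_le_mul_of_nonneg_left _ (by positivity)
  apply Finset.sum_le_sum
  intro j hj
  exact t_monoB K B B' hK' hB hBB' j (Finset.mem_Icc.mp hj).1
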